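/- Let y_1,...,y_N ∈ ℝ^L and define C ∈ ℝ^{NL×NL} by C_{(i,k);(j,l)} = ⟨R_{-k} y_i, R_{-l} y_j⟩. Then there exists a unitary matrix P ∈ ℂ^{NL×NL} such that P C P* is block diagonal with L blocks C_0,...,C_{L-1} ∈ ℂ^{N×N}, where (C_k)_{ij} = L · F(y_i,k) · conj(F(y_j,k)); in particular each block C_k is Hermitian of rank at most 1. -/

import Mathlib

open Finset Matrix

/-- Unitary discrete Fourier transform of a real vector. -/
noncomputable def dftR {L : ℕ} [NeZero L] (x : ZMod L → ℝ) (k : ZMod L) : ℂ :=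
  (1 / Real.sqrt L) * ∑ j : ZMod L, (x j : ℂ) *
    Complex.exp (-(2 * (Real.pi : ℂ) * Complex.I * (j.val : ℂ) * (k.val : ℂ) / (L : ℂ)))

section helpers
variable {L : ℕ} [NeZero L]

noncomputable def zeta (L : ℕ) : ℂ := Complex.exp (2 * Real.pi * Complex.I / L)

noncomputable def psi (L : ℕ) [NeZero L] (a : ZMod L) : ℂ := zeta L ^ a.val

lemma zeta_pow_L : zeta L ^ L = 1 := by
  rw [zeta, ← Complex.exp_nat_mul]
  rw [mul_div_cancel₀]
  · exact Complex.exp_two_pi_mul_I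
  · exact_mod_cast NeZero.ne L

lemma zeta_pow_mod (n : ℕ) : zeta L ^ n = zeta L ^ (n % L) := by
  conv_lhs => rw [← Nat.div_add_mod n L]
  rw [pow_add, pow_mul, zeta_pow_L, one_pow, one_mul]

lemma psi_add (a b : ZMod L) : psi L (a + b) = psi L a * psi L b := by
  rw [psi, ZMod.val_add, ← zeta_pow_mod, pow_add]; rfl

lemma psi_zero : psi L 0 = 1 := by simp [psi, ZMod.val_zero]

lemma psi_ne_zero (a : ZMod L) : psi L a ≠ 0 := pow_ne_zero _ (Complex.exp_ne_zero _)

lemma psi_neg (a : ZMod L) : psi L (-a) = (psi L a)⁻¹ := by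
  have h : psi L a * psi L (-a) = 1 := by
    rw [← psi_add]; simp [psi_zero]
  field_simp [psi_ne_zero a] at h ⊢
  linear_combination h

lemma conj_psi (a : ZMod L) : (starRingEnd ℂ) (psi L a) = psi L (-a) := by
  rw [psi_neg]
  simp only [psi]
  rw [← inv_pow, map_pow]
  congr 1
  rw [zeta, ← Complex.exp_conj, ← Complex.exp_neg]
  congr 1
  simp [Complex.conj_I, map_ofNat]
  ring

lemma psi_sum (c : ZMod L) : ∑ t : ZMod L, psi L (c * t) = if c = 0 then (L : ℂ) else 0 := by
  have hval : ∀ t : ZMod L, psi L (c * t) = (psi L c) ^ t.val := by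
    intro t
    rw [psi, psi, ZMod.val_mul, ← zeta_pow_mod, pow_mul]
  simp_rw [hval]
  obtain ⟨M, rfl⟩ : ∃ M, L = M + 1 := ⟨L - 1, (Nat.succ_pred_eq_of_pos (Nat.pos_of_ne_zero (NeZero.ne L))).symm⟩
  rw [show (Finset.univ : Finset (ZMod (M+1))) = (Finset.univ : Finset (Fin (M+1))) from rfl]
  rw [show (fun t : ZMod (M+1) => psi (M+1) c ^ t.val) = (fun t : Fin (M+1) => psi (M+1) c ^ (t : ℕ)) from rfl]
  change (∑ t : Fin (M+1), psi (M+1) c ^ (t : ℕ)) = _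
  rw [Fin.sum_univ_eq_sum_range (fun n => psi (M+1) c ^ n)]
  split_ifs with hc
  · subst hc; simp [psi_zero]
  · have hne : psi (M+1) c ≠ 1 := by
      intro h
      have hprim := Complex.isPrimitiveRoot_exp (M+1) (NeZero.ne (M+1))
      rw [psi] at h
      have hd := (IsPrimitiveRoot.pow_eq_one_iff_dvd hprim c.val).mp h
      have hlt := ZMod.val_lt c
      have : c.val = 0 := Nat.eq_zero_of_dvd_of_lt hd hlt
      exact hc (by rwa [← ZMod.val_eq_zero])
    rw [geom_sum_eq hne]
    have : psi (M+1) c ^ (M+1) = 1 := by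
      rw [psi, ← pow_mul, mul_comm, pow_mul, zeta_pow_L, one_pow]
    rw [this]; simp

lemma exp_eq_psi (u k : ZMod L) :
    Complex.exp (-(2 * (Real.pi : ℂ) * Complex.I * (u.val : ℂ) * (k.val : ℂ) / (L : ℂ)))
      = psi L (-(u * k)) := by
  have h1 : psi L (u * k) = Complex.exp (2 * (Real.pi : ℂ) * Complex.I * (u.val : ℂ) * (k.val : ℂ) / (L : ℂ)) := by
    rw [psi, ZMod.val_mul, ← zeta_pow_mod, zeta, ← Complex.exp_nat_mul]
    congr 1; push_cast; ring
  rw [psi_neg, h1, ← Complex.exp_neg]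

/-- DFT rewritten using `psi`. -/
lemma dftR_eq (x : ZMod L → ℝ) (k : ZMod L) :
    dftR x k = (((Real.sqrt L : ℝ) : ℂ))⁻¹ * ∑ u : ZMod L, (x u : ℂ) * psi L (-(u * k)) := by
  rw [dftR, one_div]
  simp_rw [exp_eq_psi]

/-- the key triple-sum manipulation -/
lemma key_sum (k l : ZMod L) (f g : ZMod L → ℝ) :
    ∑ b : ZMod L, (∑ a : ZMod L, psi L (-(k * a)) *
        (∑ t : ZMod L, (f (t + a) : ℂ) * (g (t + b) : ℂ))) * psi L (l * b)
      = (if k = l then (L : ℂ) else 0) * (∑ u : ZMod L, (f u : ℂ) * psi L (-(k * u)))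
          * (∑ v : ZMod L, (g v : ℂ) * psi L (l * v)) := by
  have step1 : ∀ t : ZMod L, ∑ a : ZMod L, psi L (-(k * a)) * (f (t + a) : ℂ)
      = psi L (k * t) * ∑ u : ZMod L, (f u : ℂ) * psi L (-(k * u)) := by
    intro t
    rw [Finset.mul_sum]
    apply Fintype.sum_equiv (Equiv.addLeft t)
    intro a
    simp only [Equiv.coe_addLeft]
    have h : psi L (k * t) * psi L (-(k * (t + a))) = psi L (-(k * a)) := by
      rw [← psi_add]; congr 1; ring
    linear_combination (-(f (t + a) : ℂ)) * h
  have step2 : ∀ t : ZMod L, ∑ b : ZMod L, psi L (l * b) * (g (t + b) : ℂ)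
      = psi L (-(l * t)) * ∑ v : ZMod L, (g v : ℂ) * psi L (l * v) := by
    intro t
    rw [Finset.mul_sum]
    apply Fintype.sum_equiv (Equiv.addLeft t)
    intro b
    simp only [Equiv.coe_addLeft]
    have h : psi L (-(l * t)) * psi L (l * (t + b)) = psi L (l * b) := by
      rw [← psi_add]; congr 1; ring
    linear_combination (-(g (t + b) : ℂ)) * h
  have middle : ∑ b : ZMod L, (∑ a : ZMod L, psi L (-(k * a)) *
        (∑ t : ZMod L, (f (t + a) : ℂ) * (g (t + b) : ℂ))) * psi L (l * b)
      = ∑ t : ZMod L, (∑ a : ZMod L, psi L (-(k * a)) * (f (t + a) : ℂ)) *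
          (∑ b : ZMod L, psi L (l * b) * (g (t + b) : ℂ)) := by
    simp_rw [Finset.mul_sum, Finset.sum_mul]
    refine Eq.trans Finset.sum_comm ?_
    refine Eq.trans (Finset.sum_congr rfl fun a _ => Finset.sum_comm) ?_
    refine Eq.trans Finset.sum_comm ?_
    refine Finset.sum_congr rfl fun t _ => Finset.sum_comm.trans ?_
    refine Finset.sum_congr rfl fun a _ => Finset.sum_congr rfl fun b _ => ?_
    ring
  rw [middle]
  simp_rw [step1, step2]
  have : ∀ t : ZMod L, psi L (k * t) * psi L (-(l * t)) = psi L ((k - l) * t) := by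
    intro t; rw [← psi_add]; congr 1; ring
  calc ∑ t : ZMod L, psi L (k * t) * (∑ u : ZMod L, (f u : ℂ) * psi L (-(k * u))) *
          (psi L (-(l * t)) * ∑ v : ZMod L, (g v : ℂ) * psi L (l * v))
      = (∑ t : ZMod L, psi L ((k - l) * t)) * (∑ u : ZMod L, (f u : ℂ) * psi L (-(k * u))) *
          (∑ v : ZMod L, (g v : ℂ) * psi L (l * v)) := by
        rw [Finset.sum_mul, Finset.sum_mul]
        refine Finset.sum_congr rfl fun t _ => ?_
        rw [← this t]; ring
    _ = _ := by
        rw [psi_sum]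
        congr 2
        simp [sub_eq_zero]

end helpers

lemma star_psi {L : ℕ} [NeZero L] (a : ZMod L) : star (psi L a) = psi L (-a) := conj_psi a

/-- there is a unitary `P` with `P C P*` block diagonal, with `L`
diagonal blocks `C_k ∈ ℂ^{N×N}`, `(C_k)_{ij} = L ⬝ F(yᵢ,k) conj(F(y_j,k))`;
each block is Hermitian of rank at most 1. -/
theorem stmt3 (N L : ℕ) [NeZero L] (y : Fin N → ZMod L → ℝ)
    (C : Matrix (Fin N × ZMod L) (Fin N × ZMod L) ℝ)
    (hC : ∀ i j : Fin N, ∀ k l : ZMod L,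
      C (i, k) (j, l) = ∑ t : ZMod L, y i (t + k) * y j (t + l))
    (B : ZMod L → Matrix (Fin N) (Fin N) ℂ)
    (hB : ∀ k : ZMod L, ∀ i j : Fin N,
      B k i j = (L : ℂ) * dftR (y i) k * (starRingEnd ℂ) (dftR (y j) k)) :
    (∃ P : Matrix (Fin N × ZMod L) (Fin N × ZMod L) ℂ,
        P ∈ Matrix.unitaryGroup (Fin N × ZMod L) ℂ ∧
        ∀ i j : Fin N, ∀ k l : ZMod L,
          (P * C.map (Complex.ofReal) * Pᴴ) (i, k) (j, l) =
            if k = l then B k i j else 0)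
      ∧ (∀ k : ZMod L, (B k).IsHermitian ∧ (B k).rank ≤ 1) := by
  have hL0 : (0:ℝ) < (L:ℝ) := Nat.cast_pos.mpr (Nat.pos_of_ne_zero (NeZero.ne L))
  have hLC : (L:ℂ) ≠ 0 := Nat.cast_ne_zero.mpr (NeZero.ne L)
  set c : ℂ := (((Real.sqrt L : ℝ) : ℂ))⁻¹ with hc_def
  have hstarc : star c = c := by
    rw [hc_def, star_inv₀, Complex.star_def, Complex.conj_ofReal]
  have hcc : c * c = (L : ℂ)⁻¹ := by
    rw [hc_def, ← mul_inv]
    have : ((Real.sqrt L : ℝ) : ℂ) * ((Real.sqrt L : ℝ) : ℂ) = (L : ℂ) := by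
      rw [← Complex.ofReal_mul, Real.mul_self_sqrt hL0.le]
      norm_cast
    rw [this]
  have hstarm : ∀ (m b : ZMod L), star (c * psi L (-(m * b))) = c * psi L (m * b) := by
    intro m b
    rw [star_mul', hstarc, star_psi, neg_neg]
  set P : Matrix (Fin N × ZMod L) (Fin N × ZMod L) ℂ :=
    Matrix.of fun p q => if p.1 = q.1 then c * psi L (-(p.2 * q.2)) else 0 with hP
  have hPapp : ∀ (i1 j1 : Fin N) (k1 l1 : ZMod L),
      P (i1, k1) (j1, l1) = if i1 = j1 then c * psi L (-(k1 * l1)) else 0 := fun _ _ _ _ => rfl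
  constructor
  · refine ⟨P, ?_, ?_⟩
    · rw [Matrix.mem_unitaryGroup_iff]
      ext ⟨i, k⟩ ⟨j, l⟩
      rw [Matrix.mul_apply, Matrix.one_apply]
      by_cases hij : i = j
      · subst hij
        have h1 : (∑ x : Fin N × ZMod L, P (i,k) x * (star P) x (i,l))
            = ∑ x : Fin N × ZMod L, (if i = x.1 then (L:ℂ)⁻¹ * psi L ((l - k) * x.2) else 0) := by
          refine Finset.sum_congr rfl ?_
          rintro ⟨x1, x2⟩ _
          rw [Matrix.star_apply, hPapp, hPapp]
          by_cases h : i = x1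
          · rw [if_pos h, if_pos h, if_pos h, hstarm]
            have hps : psi L (-(k * x2)) * psi L (l * x2) = psi L ((l - k) * x2) := by
              rw [← psi_add]; congr 1; ring
            calc c * psi L (-(k * x2)) * (c * psi L (l * x2))
                = c * c * (psi L (-(k * x2)) * psi L (l * x2)) := by ring
              _ = (L:ℂ)⁻¹ * psi L ((l - k) * x2) := by rw [hcc, hps]
          · rw [if_neg h, if_neg h, zero_mul, if_neg h]
        rw [h1, Fintype.sum_prod_type_right]
        simp only [Finset.sum_ite_eq, Finset.mem_univ, if_true]
        rw [← Finset.mul_sum, psi_sum]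
        by_cases hkl : k = l
        · subst hkl
          simp [hLC]
        · have h2 : l - k ≠ 0 := fun h => hkl (by linear_combination -h)
          have h3 : ¬ ((i, k) = (i, l)) := by simp [Prod.ext_iff, hkl]
          simp [h2, h3]
      · have h1 : (∑ x : Fin N × ZMod L, P (i,k) x * (star P) x (j,l)) = 0 := by
          refine Finset.sum_eq_zero ?_
          rintro ⟨x1, x2⟩ _
          rw [Matrix.star_apply, hPapp, hPapp]
          by_cases h : i = x1
          · rw [if_pos h, if_neg (fun h2 => hij (h.trans h2.symm)), star_zero, mul_zero]
          · rw [if_neg h, zero_mul]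
        rw [h1]
        have h3 : ¬ ((i, k) = (j, l)) := by simp [Prod.ext_iff, hij]
        simp [h3]
    · intro i j k l
      rw [Matrix.mul_apply]
      have h1 : ∀ r : Fin N × ZMod L, (P * C.map Complex.ofReal) (i, k) r
          = ∑ a : ZMod L, c * psi L (-(k * a)) * ((C (i, a) r : ℝ) : ℂ) := by
        intro r
        rw [Matrix.mul_apply]
        have : ∀ s : Fin N × ZMod L, P (i,k) s * (C.map Complex.ofReal) s r
            = if i = s.1 then c * psi L (-(k * s.2)) * ((C (i, s.2) r : ℝ) : ℂ) else 0 := by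
          rintro ⟨s1, s2⟩
          rw [hPapp, Matrix.map_apply]
          by_cases h : i = s1
          · subst h; rw [if_pos rfl, if_pos rfl]
          · rw [if_neg h, if_neg h, zero_mul]
        rw [Finset.sum_congr rfl fun s _ => this s, Fintype.sum_prod_type_right]
        simp only [Finset.sum_ite_eq, Finset.mem_univ, if_true]
      have h2 : (∑ r : Fin N × ZMod L, (P * C.map Complex.ofReal) (i, k) r * Pᴴ r (j, l))
          = ∑ b : ZMod L, (∑ a : ZMod L, c * psi L (-(k * a)) * ((C (i, a) (j, b) : ℝ) : ℂ))
              * (c * psi L (l * b)) := by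
        have : ∀ r : Fin N × ZMod L, (P * C.map Complex.ofReal) (i, k) r * Pᴴ r (j, l)
            = if j = r.1 then (∑ a : ZMod L, c * psi L (-(k * a)) * ((C (i, a) (j, r.2) : ℝ) : ℂ))
                * (c * psi L (l * r.2)) else 0 := by
          rintro ⟨r1, r2⟩
          rw [h1 (r1, r2), Matrix.conjTranspose_apply, hPapp]
          by_cases h : j = r1
          · subst h; rw [if_pos rfl, if_pos rfl, hstarm]
          · rw [if_neg h, if_neg h, star_zero, mul_zero]
        rw [Finset.sum_congr rfl fun r _ => this r, Fintype.sum_prod_type_right]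
        simp only [Finset.sum_ite_eq, Finset.mem_univ, if_true]
      rw [h2]
      have h3 : (∑ b : ZMod L, (∑ a : ZMod L, c * psi L (-(k * a)) * ((C (i, a) (j, b) : ℝ) : ℂ))
              * (c * psi L (l * b)))
          = c * c * ∑ b : ZMod L, (∑ a : ZMod L, psi L (-(k * a)) *
              (∑ t : ZMod L, ((y i (t + a) : ℝ) : ℂ) * ((y j (t + b) : ℝ) : ℂ))) * psi L (l * b) := by
        rw [Finset.mul_sum]
        refine Finset.sum_congr rfl fun b _ => ?_
        have hCc : ∀ a : ZMod L, ((C (i, a) (j, b) : ℝ) : ℂ)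
            = ∑ t : ZMod L, ((y i (t + a) : ℝ) : ℂ) * ((y j (t + b) : ℝ) : ℂ) := by
          intro a
          rw [hC]
          push_cast
          rfl
        calc (∑ a : ZMod L, c * psi L (-(k * a)) * ((C (i, a) (j, b) : ℝ) : ℂ)) * (c * psi L (l * b))
            = (c * ∑ a : ZMod L, psi L (-(k * a)) * ((C (i, a) (j, b) : ℝ) : ℂ)) * (c * psi L (l * b)) := by
              rw [Finset.mul_sum]; congr 1; exact Finset.sum_congr rfl fun a _ => by ring
          _ = c * c * ((∑ a : ZMod L, psi L (-(k * a)) * ((C (i, a) (j, b) : ℝ) : ℂ)) * psi L (l * b)) := by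
              ring
          _ = _ := by rw [← Finset.sum_congr rfl fun a (_ : a ∈ Finset.univ) => by rw [hCc a]]
      rw [h3, key_sum k l (y i) (y j)]
      have hdi : dftR (y i) k = c * ∑ u : ZMod L, ((y i u : ℝ) : ℂ) * psi L (-(k * u)) := by
        rw [dftR_eq]
        congr 1
        refine Finset.sum_congr rfl fun u _ => ?_
        rw [mul_comm k u]
      have hdj : (starRingEnd ℂ) (dftR (y j) k) = c * ∑ v : ZMod L, ((y j v : ℝ) : ℂ) * psi L (k * v) := by
        rw [dftR_eq, _root_.map_mul, map_sum]
        have : ∀ v : ZMod L, (starRingEnd ℂ) (((y j v : ℝ) : ℂ) * psi L (-(v * k)))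
            = ((y j v : ℝ) : ℂ) * psi L (k * v) := by
          intro v
          rw [_root_.map_mul, Complex.conj_ofReal, conj_psi, neg_neg, mul_comm v k]
        rw [Finset.sum_congr rfl fun v _ => this v]
        congr 1
      by_cases hkl : k = l
      · subst hkl
        rw [if_pos rfl, if_pos rfl, hB, hdi, hdj]
        ring
      · rw [if_neg hkl, if_neg hkl]
        ring
  · intro k
    constructor
    · ext i j
      rw [Matrix.conjTranspose_apply, hB, hB]
      simp only [Complex.star_def, _root_.map_mul, Complex.conj_conj, Complex.conj_natCast]
      ring
    · have hBk : B k = Matrix.vecMulVec (fun i => (L : ℂ) * dftR (y i) k)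
          (fun j => (starRingEnd ℂ) (dftR (y j) k)) := by
        ext i j
        rw [Matrix.vecMulVec_apply, hB]
      rw [hBk, Matrix.vecMulVec_eq (Fin 1)]
      exact le_trans (Matrix.rank_mul_le_left _ _)
        (le_trans (Matrix.rank_le_card_width _) (by simp))
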